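/- In the general fixed-point-matrix setup, the linear map M = I + 2 W_G W_J − W_G − W_J is firmly nonexpansive: for every x ∈ ℝⁿ, ‖M x‖² ≤ ⟨M x, x⟩. -/

import Mathlib

noncomputable section
open Filter Topology

/-- `ℝⁿ` as a Euclidean space. -/
abbrev E (n : ℕ) := EuclideanSpace ℝ (Fin n)

/-- Orthogonal projection onto a subspace `T`, as an endomorphism of `ℝⁿ`. -/
def projCLM {n : ℕ} (T : Submodule ℝ (E n)) : E n →L[ℝ] E n :=
  T.subtypeL.comp (T.orthogonalProjection)

/-- A linear map is symmetric positive semidefinite. -/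
def IsSymPSD {n : ℕ} (A : E n →L[ℝ] E n) : Prop :=
  (∀ x y : E n, (inner ℝ (A x) y : ℝ) = inner ℝ x (A y)) ∧ ∀ x : E n, (0 : ℝ) ≤ inner ℝ (A x) x

/-- `W = P_T ∘ (I + P_T ∘ H ∘ P_T)⁻¹ ∘ P_T`, the building block of the Douglas–Rachford
fixed-point matrix (`Ring.inverse` is the genuine inverse since `I + P_T H P_T` is
invertible for symmetric positive semidefinite `H`). -/
def Wop {n : ℕ} (T : Submodule ℝ (E n)) (H : E n →L[ℝ] E n) : E n →L[ℝ] E n :=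
  projCLM T * Ring.inverse (1 + projCLM T * H * projCLM T) * projCLM T

/-- The Douglas–Rachford fixed-point matrix `M = I + 2 W_G W_J − W_G − W_J`. -/
def Mop {n : ℕ} (TJ TG : Submodule ℝ (E n)) (HJ HG : E n →L[ℝ] E n) : E n →L[ℝ] E n :=
  1 + (2 : ℝ) • (Wop TG HG * Wop TJ HJ) - Wop TG HG - Wop TJ HJ

/-- The relaxed matrix `M_λ = (1 − λ) I + λ M`. -/
def Mlam {n : ℕ} (lam : ℝ) (TJ TG : Submodule ℝ (E n)) (HJ HG : E n →L[ℝ] E n) :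
    E n →L[ℝ] E n :=
  (1 - lam) • (1 : E n →L[ℝ] E n) + lam • Mop TJ TG HJ HG

/-- The fixed-point set `Fix A = {x | A x = x}` as a submodule, i.e. `ker (A − I)`. -/
def FixM {n : ℕ} (A : E n →L[ℝ] E n) : Submodule ℝ (E n) :=
  LinearMap.ker ((A - 1 : E n →L[ℝ] E n) : E n →ₗ[ℝ] E n)

/-- `M^∞`: the orthogonal projection onto `Fix M`. -/
def Minf {n : ℕ} (TJ TG : Submodule ℝ (E n)) (HJ HG : E n →L[ℝ] E n) : E n →L[ℝ] E n :=
  projCLM (FixM (Mop TJ TG HJ HG))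

/-- The spectral radius of an endomorphism of `ℝⁿ`: the supremum of the moduli of the
complex eigenvalues (eigenvalues of the complexified matrix). -/
def specRad {n : ℕ} (A : E n →L[ℝ] E n) : ℝ :=
  sSup ((fun z : ℂ => ‖z‖) ''
    spectrum ℂ (((LinearMap.toMatrix (EuclideanSpace.basisFun (Fin n) ℝ).toBasis
      (EuclideanSpace.basisFun (Fin n) ℝ).toBasis) A.toLinearMap).map (algebraMap ℝ ℂ)))

/-- The cosine of the Friedrichs angle between two subspaces `U` and `V`. -/
def cF {n : ℕ} (U V : Submodule ℝ (E n)) : ℝ :=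
  sSup {r : ℝ | ∃ u v : E n, u ∈ U ⊓ (U ⊓ V)ᗮ ∧ v ∈ V ⊓ (U ⊓ V)ᗮ ∧
    ‖u‖ ≤ 1 ∧ ‖v‖ ≤ 1 ∧ r = (inner ℝ u v : ℝ)}

namespace S7aux

variable {n : ℕ}

lemma proj_symm (T : Submodule ℝ (E n)) (x y : E n) :
    (inner ℝ (projCLM T x) y : ℝ) = inner ℝ x (projCLM T y) := by
  have h := Submodule.inner_starProjection_left_eq_right T x y
  simp only [Submodule.starProjection_apply] at h
  simpa [projCLM] using h

lemma proj_idem (T : Submodule ℝ (E n)) (x : E n) :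
    projCLM T (projCLM T x) = projCLM T x := by
  simp [projCLM, Submodule.orthogonalProjection_mem_subspace_eq_self,
    Submodule.starProjection_eq_self_iff, Submodule.starProjection_apply_mem]

lemma proj_norm_le (T : Submodule ℝ (E n)) (x : E n) : ‖projCLM T x‖ ≤ ‖x‖ := by
  rcases eq_or_ne (projCLM T x) 0 with h | h
  · simp [h]
  · have h1 : ‖projCLM T x‖ ^ 2 = (inner ℝ x (projCLM T x) : ℝ) := by
      rw [← real_inner_self_eq_norm_sq, ← proj_symm, proj_idem]
      exact real_inner_comm _ _
    have h2 : (inner ℝ x (projCLM T x) : ℝ) ≤ ‖x‖ * ‖projCLM T x‖ :=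
      real_inner_le_norm _ _
    have hpos : 0 < ‖projCLM T x‖ := norm_pos_iff.mpr h
    nlinarith
  
lemma isUnit_aux (T : Submodule ℝ (E n)) (H : E n →L[ℝ] E n) (hH : IsSymPSD H) :
    IsUnit (1 + projCLM T * H * projCLM T) := by
  set A : E n →L[ℝ] E n := 1 + projCLM T * H * projCLM T with hA
  have hcoerc : ∀ z : E n, ‖z‖ ^ 2 ≤ (inner ℝ (A z) z : ℝ) := by
    intro z
    have : (inner ℝ (A z) z : ℝ)
        = ‖z‖ ^ 2 + inner ℝ (H (projCLM T z)) (projCLM T z) := by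
      simp only [hA, ContinuousLinearMap.add_apply, ContinuousLinearMap.one_apply,
        ContinuousLinearMap.mul_apply]
      rw [inner_add_left, real_inner_self_eq_norm_sq, proj_symm T (H (projCLM T z)) z,
        ← proj_symm]
    rw [this]
    have := hH.2 (projCLM T z)
    linarith
  have hinj : Function.Injective A := by
    intro x y hxy
    rw [← sub_eq_zero, ← map_sub] at hxy
    have := hcoerc (x - y)
    rw [hxy] at this
    simp only [inner_zero_left] at this
    have : ‖x - y‖ = 0 := by nlinarith [norm_nonneg (x - y)]
    rwa [norm_eq_zero, sub_eq_zero] at this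
  have hinjL : Function.Injective A.toLinearMap := hinj
  let e : E n ≃ₗ[ℝ] E n := LinearEquiv.ofInjectiveEndo A.toLinearMap hinjL
  exact ⟨e.toContinuousLinearEquiv.toUnit, by ext x; rfl⟩

lemma W_firm (T : Submodule ℝ (E n)) (H : E n →L[ℝ] E n) (hH : IsSymPSD H) (x : E n) :
    ‖Wop T H x‖ ^ 2 ≤ (inner ℝ (Wop T H x) x : ℝ) := by
  set A : E n →L[ℝ] E n := 1 + projCLM T * H * projCLM T with hA
  have hU := isUnit_aux T H hH
  set y : E n := Ring.inverse A (projCLM T x) with hy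
  have hAy : A y = projCLM T x := by
    have h1 : A * Ring.inverse A = 1 := Ring.mul_inverse_cancel A hU
    calc A y = (A * Ring.inverse A) (projCLM T x) := rfl
    _ = projCLM T x := by rw [h1]; rfl
  have hW : Wop T H x = projCLM T y := rfl
  have hAy' : y + projCLM T (H (projCLM T y)) = projCLM T x := by
    simpa only [hA, ContinuousLinearMap.add_apply, ContinuousLinearMap.one_apply,
      ContinuousLinearMap.mul_apply] using hAy
  have hinner : (inner ℝ (Wop T H x) x : ℝ)
      = ‖y‖ ^ 2 + inner ℝ (H (projCLM T y)) (projCLM T y) := by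
    rw [hW, proj_symm, ← hAy', inner_add_right, real_inner_self_eq_norm_sq,
      ← proj_symm, real_inner_comm]
  have hpsd := hH.2 (projCLM T y)
  have hn : ‖Wop T H x‖ ^ 2 ≤ ‖y‖ ^ 2 := by
    rw [hW]
    have := proj_norm_le T y
    nlinarith [norm_nonneg (projCLM T y)]
  linarith [hn, hinner.ge, hpsd, hinner.le]

lemma R_nonexp (T : Submodule ℝ (E n)) (H : E n →L[ℝ] E n) (hH : IsSymPSD H) (x : E n) :
    ‖(2 : ℝ) • Wop T H x - x‖ ≤ ‖x‖ := by
  have hsq : ‖(2 : ℝ) • Wop T H x - x‖ ^ 2 ≤ ‖x‖ ^ 2 := by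
    rw [norm_sub_sq_real]
    rw [norm_smul, real_inner_smul_left]
    have h := W_firm T H hH x
    have : ‖(2:ℝ)‖ = 2 := by norm_num
    rw [this]
    nlinarith
  have h1 : ‖(2 : ℝ) • Wop T H x - x‖ = Real.sqrt (‖(2 : ℝ) • Wop T H x - x‖ ^ 2) := by
    rw [Real.sqrt_sq (norm_nonneg _)]
  rw [h1, ← Real.sqrt_sq (norm_nonneg x)]
  exact Real.sqrt_le_sqrt hsq

end S7aux

/-- In the general fixed-point-matrix setup, `M = I + 2W_G W_J − W_G − W_J`
is firmly nonexpansive: `‖M x‖² ≤ ⟨M x, x⟩` for all `x`. -/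
theorem statement7 {n : ℕ} (TJ TG : Submodule ℝ (E n)) (HJ HG : E n →L[ℝ] E n)
    (hHJ : IsSymPSD HJ) (hHG : IsSymPSD HG) :
    ∀ x : E n, ‖Mop TJ TG HJ HG x‖ ^ 2 ≤ (inner ℝ (Mop TJ TG HJ HG x) x : ℝ) := by
  intro x
  set wg := Wop TG HG with hwg
  set wj := Wop TJ HJ with hwj
  set u : E n := (2 : ℝ) • wj x - x with hu
  set v : E n := (2 : ℝ) • wg u - u with hv
  have hM : Mop TJ TG HJ HG x = ((1 : ℝ)/2) • (x + v) := by
    simp only [Mop, ContinuousLinearMap.sub_apply, ContinuousLinearMap.add_apply,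
      ContinuousLinearMap.smul_apply, ContinuousLinearMap.mul_apply,
      ContinuousLinearMap.one_apply, hv, hu, map_sub, map_smul, ← hwg, ← hwj]
    module
  have hux : ‖u‖ ≤ ‖x‖ := S7aux.R_nonexp TJ HJ hHJ x
  have hvu : ‖v‖ ≤ ‖u‖ := S7aux.R_nonexp TG HG hHG u
  have hvx : ‖v‖ ≤ ‖x‖ := le_trans hvu hux
  rw [hM]
  have h1 : ‖x + v‖ ^ 2 = ‖x‖ ^ 2 + 2 * (inner ℝ x v : ℝ) + ‖v‖ ^ 2 := norm_add_sq_real x v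
  have h2 : (inner ℝ (((1 : ℝ)/2) • (x + v)) x : ℝ)
      = (1/2) * ((inner ℝ x x : ℝ) + (inner ℝ v x : ℝ)) := by
    rw [real_inner_smul_left, inner_add_left]
  have h3 : ‖((1 : ℝ)/2) • (x + v)‖ ^ 2 = (1/4) * ‖x + v‖ ^ 2 := by
    rw [norm_smul]
    simp [Real.norm_eq_abs]
    ring
  rw [h2, h3, h1, real_inner_self_eq_norm_sq, real_inner_comm v x]
  nlinarith [norm_nonneg x, norm_nonneg v]
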